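/- Suppose (u, E) ∈ H¹_per × ℝ satisfies ∫₀¹ u² = 1 and a_R(u,v) = E ∫₀¹ u v for all v ∈ H¹_per, and suppose (u_N, E_N) ∈ X_N × ℝ satisfies ∫₀¹ u_N² = 1 and a_R(u_N, v) = E_N ∫₀¹ u_N v for all v ∈ X_N. Then the exact identity (E_N − E) · ( 1 − (1/2) ∫₀¹ (u_N − u)² ) = z1 u_N(0) (Π_N^⊥ u)(0) + z2 u_N(R) (Π_N^⊥ u)(R) holds. -/

import Mathlib

open MeasureTheory intervalIntegral Real

noncomputable section

/-- `v` belongs to `H¹_per` with (weak) derivative `v'`. -/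
def IsH1per (v v' : ℝ → ℝ) : Prop :=
  Continuous v ∧ (∀ x, v (x + 1) = v x) ∧ (∀ x, v' (x + 1) = v' x) ∧
  (∀ a b : ℝ, IntervalIntegrable v' volume a b) ∧
  IntervalIntegrable (fun t => (v' t) ^ 2) volume 0 1 ∧
  (∀ x : ℝ, v x = v 0 + ∫ t in (0:ℝ)..x, v' t)

/-- The bilinear form `a_R`. -/
def aR (z1 z2 R : ℝ) (v v' w w' : ℝ → ℝ) : ℝ :=
  (∫ x in (0:ℝ)..1, v' x * w' x) - z1 * v 0 * w 0 - z2 * v R * w R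

/-- `v` is a real trigonometric polynomial of degree at most `N`. -/
def InXN (N : ℕ) (v : ℝ → ℝ) : Prop :=
  ∃ c : ℤ → ℂ, (∀ k : ℤ, c (-k) = starRingEnd ℂ (c k)) ∧
    ∀ x : ℝ, (v x : ℂ) =
      ∑ k ∈ Finset.Icc (-(N:ℤ)) (N:ℤ), c k * Complex.exp (2 * (π:ℂ) * Complex.I * (k:ℂ) * (x:ℂ))

/-- Fourier coefficient `ŵ(k) = ∫₀¹ w(x) e^{−2πikx} dx`. -/
def fc (w : ℝ → ℝ) (k : ℤ) : ℂ :=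
  ∫ x in (0:ℝ)..1, (w x : ℂ) * Complex.exp (-(2 * (π:ℂ) * Complex.I * (k:ℂ) * (x:ℂ)))

/-- `(Π_N^⊥ w)(x) = w(x) − ∑_{|k|≤N} ŵ(k) e^{2πikx}`. -/
def projPerp (N : ℕ) (w : ℝ → ℝ) (x : ℝ) : ℝ :=
  w x - (∑ k ∈ Finset.Icc (-(N:ℤ)) (N:ℤ),
    fc w k * Complex.exp (2 * (π:ℂ) * Complex.I * (k:ℂ) * (x:ℂ))).re

namespace EDPI

/-! ### The exponentials `e_k` -/

def ek (k : ℤ) (x : ℝ) : ℂ :=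
  Complex.exp (2 * (π:ℂ) * Complex.I * (k:ℂ) * (x:ℂ))

lemma continuous_ek (k : ℤ) : Continuous (ek k) :=
  Complex.continuous_exp.comp (continuous_const.mul Complex.continuous_ofReal)

lemma ek_add_one (k : ℤ) (x : ℝ) : ek k (x + 1) = ek k x := by
  unfold ek
  push_cast
  rw [mul_add, Complex.exp_add, mul_one,
    show (2 * (π:ℂ) * Complex.I * k) = k * (2 * π * Complex.I) by ring,
    Complex.exp_int_mul_two_pi_mul_I, mul_one]

lemma conj_ek (k : ℤ) (x : ℝ) : (starRingEnd ℂ) (ek k x) = ek (-k) x := by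
  unfold ek
  rw [← Complex.exp_conj]
  congr 1
  simp only [map_mul, Complex.conj_I, Complex.conj_ofReal, map_ofNat, map_intCast]
  push_cast
  ring

lemma ek_mul (j k : ℤ) (x : ℝ) : ek j x * ek k x = ek (j + k) x := by
  unfold ek
  rw [← Complex.exp_add]
  congr 1
  push_cast
  ring

lemma hasDerivAt_ek (k : ℤ) (x : ℝ) :
    HasDerivAt (ek k) (2 * (π:ℂ) * Complex.I * (k:ℂ) * ek k x) x := by
  have h1 : HasDerivAt (fun y : ℝ => ((y : ℝ) : ℂ)) 1 x := by
    simpa using (hasDerivAt_id x).ofReal_comp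
  have h2 := (h1.const_mul (2 * (π:ℂ) * Complex.I * (k:ℂ))).cexp
  simp only [mul_one] at h2
  convert h2 using 1
  exacts [rfl, mul_comm _ _]

lemma integral_ek (k : ℤ) :
    (∫ x in (0:ℝ)..1, ek k x) = if k = 0 then 1 else 0 := by
  rcases eq_or_ne k 0 with hk | hk
  · simp [ek, hk]
  · have hc : (2 * (π:ℂ) * Complex.I * (k:ℂ)) ≠ 0 := by
      apply mul_ne_zero (mul_ne_zero (mul_ne_zero two_ne_zero _) Complex.I_ne_zero)
      · exact_mod_cast Int.cast_ne_zero.mpr hk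
      · exact_mod_cast Real.pi_ne_zero
    have h0 : (∫ x in (0:ℝ)..1, ek k x)
        = ∫ x in (0:ℝ)..1, Complex.exp ((2 * (π:ℂ) * Complex.I * (k:ℂ)) * x) := rfl
    rw [h0, integral_exp_mul_complex hc, if_neg hk]
    simp only [Complex.ofReal_one, Complex.ofReal_zero, mul_one, mul_zero, Complex.exp_zero]
    rw [show (2 * (π:ℂ) * Complex.I * (k:ℂ)) = (k:ℂ) * (2 * π * Complex.I) by ring,
      Complex.exp_int_mul_two_pi_mul_I]
    simp

/-! ### Trigonometric polynomials -/

def S (N : ℕ) : Finset ℤ := Finset.Icc (-(N:ℤ)) (N:ℤ)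

lemma neg_mem_S {N : ℕ} {k : ℤ} (h : k ∈ S N) : -k ∈ S N := by
  simp only [S, Finset.mem_Icc] at *; omega

def tsumC (a : ℤ → ℂ) (N : ℕ) (x : ℝ) : ℂ := ∑ k ∈ S N, a k * ek k x

def tp (a : ℤ → ℂ) (N : ℕ) (x : ℝ) : ℝ := (tsumC a N x).re

lemma continuous_tsumC (a : ℤ → ℂ) (N : ℕ) : Continuous (tsumC a N) :=
  continuous_finset_sum _ fun k _ => continuous_const.mul (continuous_ek k)

lemma continuous_tp (a : ℤ → ℂ) (N : ℕ) : Continuous (tp a N) :=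
  Complex.continuous_re.comp (continuous_tsumC a N)

lemma tp_add_one (a : ℤ → ℂ) (N : ℕ) (x : ℝ) : tp a N (x + 1) = tp a N x := by
  unfold tp tsumC
  congr 1
  exact Finset.sum_congr rfl fun k _ => by rw [ek_add_one]

def Real' (a : ℤ → ℂ) : Prop := ∀ k, a (-k) = (starRingEnd ℂ) (a k)

lemma tsumC_conj (a : ℤ → ℂ) (ha : Real' a) (N : ℕ) (x : ℝ) :
    ((tp a N x : ℝ) : ℂ) = tsumC a N x := by
  have h : (starRingEnd ℂ) (tsumC a N x) = tsumC a N x := by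
    unfold tsumC
    rw [map_sum]
    refine Finset.sum_equiv (Equiv.neg ℤ) (fun k => ?_) (fun k hk => ?_)
    · simp only [S, Finset.mem_Icc, Equiv.neg_apply]; omega
    · simp only [Equiv.neg_apply]
      rw [map_mul, ← ha k, conj_ek]
  exact Complex.conj_eq_iff_re.mp h

def md (a : ℤ → ℂ) (k : ℤ) : ℂ := 2 * (π:ℂ) * Complex.I * (k:ℂ) * a k

lemma real'_md {a : ℤ → ℂ} (ha : Real' a) : Real' (md a) := by
  intro k
  unfold md
  rw [ha k]
  simp only [map_mul, Complex.conj_I, Complex.conj_ofReal, map_ofNat, map_intCast]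
  push_cast
  ring

lemma hasDerivAt_tp (a : ℤ → ℂ) (N : ℕ) (x : ℝ) :
    HasDerivAt (tp a N) (tp (md a) N x) x := by
  have h : HasDerivAt (tsumC a N) (tsumC (md a) N x) x := by
    unfold tsumC
    refine HasDerivAt.fun_sum fun k _ => ?_
    have := (hasDerivAt_ek k x).const_mul (a k)
    exact this.congr_deriv (by unfold md; ring)
  have h2 := (Complex.reCLM.hasFDerivAt.comp x h.hasFDerivAt).hasDerivAt
  exact Complex.reCLM.hasFDerivAt.comp_hasDerivAt x h

lemma tp_integral (a : ℤ → ℂ) (N : ℕ) (x : ℝ) :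
    (∫ t in (0:ℝ)..x, tp (md a) N t) = tp a N x - tp a N 0 :=
  intervalIntegral.integral_eq_sub_of_hasDerivAt (fun t _ => hasDerivAt_tp a N t)
    ((continuous_tp (md a) N).intervalIntegrable _ _)

lemma isH1per_tp (a : ℤ → ℂ) (N : ℕ) : IsH1per (tp a N) (tp (md a) N) :=
  ⟨continuous_tp a N, tp_add_one a N, tp_add_one (md a) N,
   fun _ _ => (continuous_tp _ N).intervalIntegrable _ _,
   ((continuous_tp _ N).pow 2).intervalIntegrable _ _,
   fun x => by rw [tp_integral]; ring⟩

lemma inXN_tp (a : ℤ → ℂ) (ha : Real' a) (N : ℕ) : InXN N (tp a N) :=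
  ⟨a, ha, fun x => tsumC_conj a ha N x⟩

/-! ### Fourier coefficients -/

lemma intervalIntegral_conj {f : ℝ → ℂ} {a b : ℝ} :
    (∫ x in a..b, (starRingEnd ℂ) (f x)) = (starRingEnd ℂ) (∫ x in a..b, f x) := by
  rw [intervalIntegral, intervalIntegral, map_sub, ← integral_conj, ← integral_conj]

lemma fc_neg_eq (w : ℝ → ℝ) (k : ℤ) :
    fc w (-k) = ∫ x in (0:ℝ)..1, (w x : ℂ) * ek k x := by
  unfold fc ek
  refine intervalIntegral.integral_congr fun x _ => ?_
  congr 1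
  congr 1
  push_cast
  ring

lemma fc_eq (w : ℝ → ℝ) (k : ℤ) :
    fc w k = ∫ x in (0:ℝ)..1, (w x : ℂ) * ek (-k) x := by
  have := fc_neg_eq w (-k)
  rwa [neg_neg] at this

lemma real'_fc (w : ℝ → ℝ) : Real' (fc w) := by
  intro k
  rw [fc_neg_eq w k, fc_eq w k, ← intervalIntegral_conj]
  refine intervalIntegral.integral_congr fun x _ => ?_
  rw [map_mul, Complex.conj_ofReal, conj_ek, neg_neg]

lemma fc_tp (c : ℤ → ℂ) (N : ℕ) (v : ℝ → ℝ) (hv : ∀ x, (v x : ℂ) = tsumC c N x)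
    {j : ℤ} (hj : j ∈ S N) : fc v j = c j := by
  rw [fc_eq]
  have h1 : (∫ x in (0:ℝ)..1, (v x : ℂ) * ek (-j) x)
      = ∫ x in (0:ℝ)..1, ∑ k ∈ S N, c k * ek (k + -j) x := by
    refine intervalIntegral.integral_congr fun x _ => ?_
    rw [hv x]
    unfold tsumC
    rw [Finset.sum_mul]
    exact Finset.sum_congr rfl fun k _ => by rw [mul_assoc, ek_mul]
  rw [h1, intervalIntegral.integral_finset_sum
    (fun k _ => (continuous_const.fun_mul (continuous_ek _)).intervalIntegrable _ _)]
  have h2 : ∀ k ∈ S N, (∫ x in (0:ℝ)..1, c k * ek (k + -j) x)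
      = if k = j then c k else 0 := by
    intro k _
    rw [intervalIntegral.integral_const_mul, integral_ek]
    by_cases h : k = j
    · simp [h]
    · simp [h, add_neg_eq_zero]
  rw [Finset.sum_congr rfl h2, Finset.sum_ite_eq' (S N) j (fun k => c k), if_pos hj]

lemma integral_tp_mul (a : ℤ → ℂ) (N : ℕ) (w : ℝ → ℝ) (hw : Continuous w) :
    (∫ x in (0:ℝ)..1, tp a N x * w x) = (∑ k ∈ S N, a k * fc w (-k)).re := by
  have h1 : ∀ x : ℝ, tp a N x * w x = (∑ k ∈ S N, a k * ek k x * (w x : ℂ)).re := by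
    intro x
    rw [← Finset.sum_mul]
    simp [tp, tsumC, Complex.mul_re]
  have hint : IntervalIntegrable (fun x => ∑ k ∈ S N, a k * ek k x * (w x : ℂ)) volume 0 1 := by
    apply Continuous.intervalIntegrable
    exact continuous_finset_sum _ fun k _ =>
      (continuous_const.mul (continuous_ek k)).mul (Complex.continuous_ofReal.comp hw)
  calc (∫ x in (0:ℝ)..1, tp a N x * w x)
      = ∫ x in (0:ℝ)..1, (∑ k ∈ S N, a k * ek k x * (w x : ℂ)).re :=
        intervalIntegral.integral_congr fun x _ => h1 x
    _ = (∫ x in (0:ℝ)..1, ∑ k ∈ S N, a k * ek k x * (w x : ℂ)).re := by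
        have := Complex.reCLM.intervalIntegral_comp_comm hint
        simpa using this
    _ = (∑ k ∈ S N, ∫ x in (0:ℝ)..1, a k * ek k x * (w x : ℂ)).re := by
        congr 1
        exact intervalIntegral.integral_finset_sum fun k _ =>
          (((continuous_const.mul (continuous_ek k)).mul
            (Complex.continuous_ofReal.comp hw)).intervalIntegrable _ _)
    _ = (∑ k ∈ S N, a k * fc w (-k)).re := by
        congr 1
        refine Finset.sum_congr rfl fun k _ => ?_
        rw [fc_neg_eq w k, ← intervalIntegral.integral_const_mul]
        exact intervalIntegral.integral_congr fun x _ => by ring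

lemma sum_neg_reindex (f : ℤ → ℂ) (N : ℕ) :
    ∑ k ∈ S N, f k = ∑ k ∈ S N, f (-k) := by
  refine Finset.sum_equiv (Equiv.neg ℤ) (fun k => ?_) (fun k hk => ?_)
  · simp only [S, Finset.mem_Icc, Equiv.neg_apply]; omega
  · simp only [Equiv.neg_apply, neg_neg]

/-! ### Integration by parts -/

lemma ibp (g g' φ φ' : ℝ → ℝ)
    (hgc : Continuous g)
    (hg' : IntervalIntegrable g' volume 0 1)
    (hrep : ∀ x, g x = g 0 + ∫ t in (0:ℝ)..x, g' t)
    (hφ : ∀ x, HasDerivAt φ (φ' x) x) (hφ'c : Continuous φ') :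
    (∫ x in (0:ℝ)..1, g' x * φ x)
      = g 1 * φ 1 - g 0 * φ 0 - ∫ x in (0:ℝ)..1, g x * φ' x := by
  have hφc : Continuous φ :=
    continuous_iff_continuousAt.mpr fun x => (hφ x).differentiableAt.continuousAt
  set μ : Measure ℝ := volume.restrict (Set.Ioc (0:ℝ) 1) with hμ
  have hg'I : IntegrableOn g' (Set.Ioc 0 1) volume :=
    (intervalIntegrable_iff_integrableOn_Ioc_of_le zero_le_one).mp hg'
  have hφ'I : IntegrableOn φ' (Set.Ioc 0 1) volume :=
    (intervalIntegrable_iff_integrableOn_Ioc_of_le zero_le_one).mp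
      (hφ'c.intervalIntegrable 0 1)
  set T : Set (ℝ × ℝ) := {p : ℝ × ℝ | p.1 ≤ p.2} with hTdef
  have hT : MeasurableSet T := measurableSet_le measurable_fst measurable_snd
  have hprod : Integrable (fun p : ℝ × ℝ => g' p.1 * φ' p.2) (μ.prod μ) :=
    hg'I.mul_prod hφ'I
  have hF : Integrable (T.indicator fun p : ℝ × ℝ => g' p.1 * φ' p.2) (μ.prod μ) :=
    hprod.indicator hT
  have swap :
      (∫ t, ∫ s, T.indicator (fun p : ℝ × ℝ => g' p.1 * φ' p.2) (t, s) ∂μ ∂μ)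
        = ∫ s, ∫ t, T.indicator (fun p : ℝ × ℝ => g' p.1 * φ' p.2) (t, s) ∂μ ∂μ := by
    apply integral_integral_swap
    exact hF
  have hFTCφ : ∀ t : ℝ, (∫ s in t..(1:ℝ), φ' s) = φ 1 - φ t := fun t =>
    intervalIntegral.integral_eq_sub_of_hasDerivAt (fun s _ => hφ s)
      (hφ'c.intervalIntegrable _ _)
  have inner1 : ∀ t ∈ Set.Ioc (0:ℝ) 1,
      (∫ s, T.indicator (fun p : ℝ × ℝ => g' p.1 * φ' p.2) (t, s) ∂μ)
        = g' t * (φ 1 - φ t) := by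
    intro t ht
    have h1 : (fun s => T.indicator (fun p : ℝ × ℝ => g' p.1 * φ' p.2) (t, s))
        = (Set.Ici t).indicator (fun s => g' t * φ' s) := by
      funext s
      by_cases h : t ≤ s
      · rw [Set.indicator_of_mem (show (t,s) ∈ T from h),
          Set.indicator_of_mem (Set.mem_Ici.mpr h)]
      · have h1 : (t, s) ∉ T := h
        have h2 : s ∉ Set.Ici t := h
        rw [Set.indicator_of_notMem h1, Set.indicator_of_notMem h2]
    rw [h1, MeasureTheory.integral_indicator measurableSet_Ici, hμ,
      Measure.restrict_restrict measurableSet_Ici]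
    have hset : Set.Ici t ∩ Set.Ioc 0 1 = Set.Icc t 1 := by
      ext x
      simp only [Set.mem_inter_iff, Set.mem_Ici, Set.mem_Ioc, Set.mem_Icc]
      exact ⟨fun ⟨h1, _, h3⟩ => ⟨h1, h3⟩, fun ⟨h1, h2⟩ => ⟨h1, lt_of_lt_of_le ht.1 h1, h2⟩⟩
    rw [hset, integral_Icc_eq_integral_Ioc, ← intervalIntegral.integral_of_le ht.2,
      intervalIntegral.integral_const_mul, hFTCφ t]
  have inner2 : ∀ s ∈ Set.Ioc (0:ℝ) 1,
      (∫ t, T.indicator (fun p : ℝ × ℝ => g' p.1 * φ' p.2) (t, s) ∂μ)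
        = (g s - g 0) * φ' s := by
    intro s hs
    have h1 : (fun t => T.indicator (fun p : ℝ × ℝ => g' p.1 * φ' p.2) (t, s))
        = (Set.Iic s).indicator (fun t => g' t * φ' s) := by
      funext t
      by_cases h : t ≤ s
      · rw [Set.indicator_of_mem (show (t,s) ∈ T from h),
          Set.indicator_of_mem (Set.mem_Iic.mpr h)]
      · have h1 : (t, s) ∉ T := h
        have h2 : t ∉ Set.Iic s := h
        rw [Set.indicator_of_notMem h1, Set.indicator_of_notMem h2]
    rw [h1, MeasureTheory.integral_indicator measurableSet_Iic, hμ,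
      Measure.restrict_restrict measurableSet_Iic]
    have hset : Set.Iic s ∩ Set.Ioc 0 1 = Set.Ioc 0 s := by
      ext x
      simp only [Set.mem_inter_iff, Set.mem_Iic, Set.mem_Ioc]
      exact ⟨fun ⟨h1, h2, _⟩ => ⟨h2, h1⟩, fun ⟨h1, h2⟩ => ⟨h2, h1, h2.trans hs.2⟩⟩
    have hg0s : (∫ t in (0:ℝ)..s, g' t) = g s - g 0 := by rw [hrep s]; ring
    rw [hset, ← intervalIntegral.integral_of_le hs.1.le,
      intervalIntegral.integral_mul_const, hg0s]
  have key : (∫ t in (0:ℝ)..1, g' t * (φ 1 - φ t))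
      = ∫ s in (0:ℝ)..1, (g s - g 0) * φ' s := by
    rw [intervalIntegral.integral_of_le zero_le_one,
      intervalIntegral.integral_of_le zero_le_one]
    calc (∫ t in Set.Ioc (0:ℝ) 1, g' t * (φ 1 - φ t))
        = ∫ t, ∫ s, T.indicator (fun p : ℝ × ℝ => g' p.1 * φ' p.2) (t, s) ∂μ ∂μ := by
          rw [hμ]
          exact (setIntegral_congr_fun measurableSet_Ioc fun t ht => (inner1 t ht)).symm
      _ = ∫ s, ∫ t, T.indicator (fun p : ℝ × ℝ => g' p.1 * φ' p.2) (t, s) ∂μ ∂μ := swap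
      _ = ∫ s in Set.Ioc (0:ℝ) 1, (g s - g 0) * φ' s := by
          rw [hμ]
          exact setIntegral_congr_fun measurableSet_Ioc fun s hs => (inner2 s hs)
  have hg'1 : (∫ t in (0:ℝ)..1, g' t) = g 1 - g 0 := by rw [hrep 1]; ring
  have hgφInt : IntervalIntegrable (fun t => g' t * φ t) volume 0 1 :=
    hg'.mul_continuousOn hφc.continuousOn
  have hA : (∫ t in (0:ℝ)..1, g' t * (φ 1 - φ t))
      = φ 1 * (g 1 - g 0) - ∫ t in (0:ℝ)..1, g' t * φ t := by
    have h : (∫ t in (0:ℝ)..1, g' t * (φ 1 - φ t))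
        = (∫ t in (0:ℝ)..1, g' t * φ 1) - ∫ t in (0:ℝ)..1, g' t * φ t := by
      rw [← intervalIntegral.integral_sub (hg'.mul_const _) hgφInt]
      exact intervalIntegral.integral_congr fun x _ => by ring
    rw [h, intervalIntegral.integral_mul_const, hg'1]
    ring
  have hB : (∫ s in (0:ℝ)..1, (g s - g 0) * φ' s)
      = (∫ s in (0:ℝ)..1, g s * φ' s) - g 0 * (φ 1 - φ 0) := by
    have h : (∫ s in (0:ℝ)..1, (g s - g 0) * φ' s)
        = (∫ s in (0:ℝ)..1, g s * φ' s) - ∫ s in (0:ℝ)..1, g 0 * φ' s := by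
      rw [← intervalIntegral.integral_sub ((hgc.fun_mul hφ'c).intervalIntegrable _ _)
        ((continuous_const.fun_mul hφ'c).intervalIntegrable _ _)]
      exact intervalIntegral.integral_congr fun x _ => by ring
    rw [h, intervalIntegral.integral_const_mul, hFTCφ 0]
  rw [hA, hB] at key
  linarith

end EDPI

open EDPI in
/-- Exact identity from the proof of Lemma 1:
`(E_N − E)·(1 − (1/2)∫₀¹ (u_N − u)²) = z1 u_N(0) (Π_N^⊥u)(0) + z2 u_N(R) (Π_N^⊥u)(R)`. -/
theorem energy_difference_projection_identity (z1 z2 R : ℝ) (hz1 : 0 < z1) (hz2 : 0 < z2)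
    (hR : R ∈ Set.Ioo (0 : ℝ) 1)
    (u u' : ℝ → ℝ) (E : ℝ) (hu : IsH1per u u')
    (hunorm : (∫ x in (0:ℝ)..1, (u x) ^ 2) = 1)
    (huE : ∀ v v' : ℝ → ℝ, IsH1per v v' →
      aR z1 z2 R u u' v v' = E * ∫ x in (0:ℝ)..1, u x * v x)
    (N : ℕ) (uN uN' : ℝ → ℝ) (EN : ℝ)
    (huN : IsH1per uN uN') (huNX : InXN N uN)
    (huNnorm : (∫ x in (0:ℝ)..1, (uN x) ^ 2) = 1)
    (huNE : ∀ v v' : ℝ → ℝ, IsH1per v v' → InXN N v →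
      aR z1 z2 R uN uN' v v' = EN * ∫ x in (0:ℝ)..1, uN x * v x) :
    (EN - E) * (1 - (1 / 2) * ∫ x in (0:ℝ)..1, (uN x - u x) ^ 2) =
      z1 * uN 0 * projPerp N u 0 + z2 * uN R * projPerp N u R := by
  classical
  obtain ⟨c, hcconj, hcrep0⟩ := huNX
  have hcrep : ∀ x : ℝ, (uN x : ℂ) = tsumC c N x := hcrep0
  have huNeq : ∀ x, uN x = tp c N x := fun x => by
    have h := congrArg Complex.re (hcrep x)
    simpa [tp] using h
  have hUc : Continuous u := hu.1
  have hUNc : Continuous uN := huN.1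
  have haR : Real' (fc u) := real'_fc u
  have hproj : ∀ x, projPerp N u x = u x - tp (fc u) N x := fun x => rfl
  -- Equation 1 : test uN-problem with v = P = Π_N u
  have Eq1 := huNE (tp (fc u) N) (tp (md (fc u)) N) (isH1per_tp _ N) (inXN_tp _ haR N)
  -- Equation 2 : test u-problem with v = uN (with its smooth derivative)
  have hq1 : IsH1per uN (tp (md c) N) := by
    refine ⟨hUNc, huN.2.1, tp_add_one _ N,
      fun _ _ => (continuous_tp _ N).intervalIntegrable _ _,
      ((continuous_tp _ N).pow 2).intervalIntegrable _ _, fun x => ?_⟩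
    rw [huNeq x, huNeq 0, tp_integral c N x]; ring
  have Eq2 := huE uN (tp (md c) N) hq1
  unfold aR at Eq1 Eq2
  have huN1 : uN 1 = uN 0 := by have := huN.2.1 0; simpa using this
  have hu1 : u 1 = u 0 := by have := hu.2.1 0; simpa using this
  -- integrate by parts in Eq1
  have hibp1 : (∫ x in (0:ℝ)..1, uN' x * tp (md (fc u)) N x)
      = - ∫ x in (0:ℝ)..1, uN x * tp (md (md (fc u))) N x := by
    rw [ibp uN uN' _ _ hUNc (huN.2.2.2.1 0 1) huN.2.2.2.2.2
      (fun x => hasDerivAt_tp _ N x) (continuous_tp _ N)]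
    have hper : tp (md (fc u)) N 1 = tp (md (fc u)) N 0 := by
      have := tp_add_one (md (fc u)) N 0; simpa using this
    rw [huN1, hper]; ring
  -- integrate by parts in Eq2
  have hibp2 : (∫ x in (0:ℝ)..1, u' x * tp (md c) N x)
      = - ∫ x in (0:ℝ)..1, u x * tp (md (md c)) N x := by
    rw [ibp u u' _ _ hUc (hu.2.2.2.1 0 1) hu.2.2.2.2.2
      (fun x => hasDerivAt_tp _ N x) (continuous_tp _ N)]
    have hper : tp (md c) N 1 = tp (md c) N 0 := by
      have := tp_add_one (md c) N 0; simpa using this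
    rw [hu1, hper]; ring
  -- the two second-derivative pairings agree
  have hKM : (∫ x in (0:ℝ)..1, uN x * tp (md (md (fc u))) N x)
      = ∫ x in (0:ℝ)..1, u x * tp (md (md c)) N x := by
    have e1 : (∫ x in (0:ℝ)..1, uN x * tp (md (md (fc u))) N x)
        = (∑ k ∈ S N, md (md (fc u)) k * c (-k)).re := by
      rw [show (∫ x in (0:ℝ)..1, uN x * tp (md (md (fc u))) N x)
          = ∫ x in (0:ℝ)..1, tp (md (md (fc u))) N x * uN x from
        intervalIntegral.integral_congr fun x _ => mul_comm _ _,
        integral_tp_mul _ N uN hUNc]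
      congr 1
      exact Finset.sum_congr rfl fun k hk => by
        rw [fc_tp c N uN hcrep (neg_mem_S hk)]
    have e2 : (∫ x in (0:ℝ)..1, u x * tp (md (md c)) N x)
        = (∑ k ∈ S N, md (md c) k * fc u (-k)).re := by
      rw [show (∫ x in (0:ℝ)..1, u x * tp (md (md c)) N x)
          = ∫ x in (0:ℝ)..1, tp (md (md c)) N x * u x from
        intervalIntegral.integral_congr fun x _ => mul_comm _ _,
        integral_tp_mul _ N u hUc]
    rw [e1, e2]
    congr 1
    rw [sum_neg_reindex (fun k => md (md (fc u)) k * c (-k)) N]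
    refine Finset.sum_congr rfl fun k _ => ?_
    simp only [md, neg_neg]
    push_cast
    ring
  -- ⟨uN, Π_N u⟩ = ⟨uN, u⟩
  have hPu : (∫ x in (0:ℝ)..1, uN x * tp (fc u) N x) = ∫ x in (0:ℝ)..1, uN x * u x := by
    have e1 : (∫ x in (0:ℝ)..1, uN x * tp (fc u) N x)
        = (∑ k ∈ S N, fc u k * c (-k)).re := by
      rw [show (∫ x in (0:ℝ)..1, uN x * tp (fc u) N x)
          = ∫ x in (0:ℝ)..1, tp (fc u) N x * uN x from
        intervalIntegral.integral_congr fun x _ => mul_comm _ _,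
        integral_tp_mul _ N uN hUNc]
      congr 1
      exact Finset.sum_congr rfl fun k hk => by
        rw [fc_tp c N uN hcrep (neg_mem_S hk)]
    have e2 : (∫ x in (0:ℝ)..1, uN x * u x)
        = (∑ k ∈ S N, c k * fc u (-k)).re := by
      rw [show (∫ x in (0:ℝ)..1, uN x * u x)
          = ∫ x in (0:ℝ)..1, tp c N x * u x from
        intervalIntegral.integral_congr fun x _ => by rw [huNeq x],
        integral_tp_mul _ N u hUc]
    rw [e1, e2]
    congr 1
    rw [sum_neg_reindex (fun k => fc u k * c (-k)) N]
    refine Finset.sum_congr rfl fun k _ => ?_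
    rw [neg_neg]
    ring
  -- ⟨u, uN⟩ = ⟨uN, u⟩
  have hcomm : (∫ x in (0:ℝ)..1, u x * uN x) = ∫ x in (0:ℝ)..1, uN x * u x :=
    intervalIntegral.integral_congr fun x _ => mul_comm _ _
  -- norm expansion
  have hnorm : (∫ x in (0:ℝ)..1, (uN x - u x) ^ 2)
      = 2 - 2 * ∫ x in (0:ℝ)..1, uN x * u x := by
    have h1 : (∫ x in (0:ℝ)..1, (uN x - u x) ^ 2)
        = ∫ x in (0:ℝ)..1, ((uN x) ^ 2 + (u x) ^ 2 - 2 * (uN x * u x)) :=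
      intervalIntegral.integral_congr fun x _ => by ring
    have hi1 : IntervalIntegrable (fun x => (uN x) ^ 2 + (u x) ^ 2) volume 0 1 :=
      ((hUNc.pow 2).add (hUc.pow 2)).intervalIntegrable _ _
    have hi2 : IntervalIntegrable (fun x => 2 * (uN x * u x)) volume 0 1 :=
      (continuous_const.mul (hUNc.mul hUc)).intervalIntegrable _ _
    rw [h1, intervalIntegral.integral_sub hi1 hi2,
      intervalIntegral.integral_add (by exact (hUNc.pow 2).intervalIntegrable _ _ : IntervalIntegrable (fun x => uN x ^ 2) volume 0 1)
        (by exact (hUc.pow 2).intervalIntegrable _ _ : IntervalIntegrable (fun x => u x ^ 2) volume 0 1),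
      intervalIntegral.integral_const_mul, hunorm, huNnorm]
    ring
  rw [hibp1, hKM, hPu] at Eq1
  rw [hibp2, hcomm] at Eq2
  rw [hnorm, hproj 0, hproj R]
  linear_combination Eq2 - Eq1
end
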